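/- For all k ≥ 1, t(2^(2k)) = 2^k + 1; for all k ≥ 0, t(2^(2k+1)) = 1, t(2^(2k) − 1) = 2^k, and t(2^(2k+1) − 1) = 0. -/
import Mathlib

def rs : ℕ → ℤ
  | 0 => 1
  | (n+1) =>
    if (n+1) % 2 = 0 then rs ((n+1)/2)
    else (-1)^((n+1)/2) * rs ((n+1)/2)
decreasing_by all_goals exact Nat.div_lt_self (Nat.succ_pos n) (by norm_num)

def s (n : ℕ) : ℤ := ∑ i ∈ Finset.range (n+1), rs i

def t (n : ℕ) : ℤ := ∑ i ∈ Finset.range (n+1), (-1)^i * rs i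

def A (n : ℕ) : ℤ := ∑ i ∈ Finset.range n, (-1)^i * rs i

lemma rs_even (n : ℕ) : rs (2*n) = rs n := by
  cases n with
  | zero => rfl
  | succ m =>
    have h : 2*(m+1) = (2*m+1)+1 := by omega
    rw [h, rs]
    have h1 : (2*m+1+1) % 2 = 0 := by omega
    have h2 : (2*m+1+1) / 2 = m+1 := by omega
    simp [h1, h2]

lemma rs_odd (n : ℕ) : rs (2*n+1) = (-1)^n * rs n := by
  rw [rs]
  have h1 : ¬ ((2*n+1) % 2 = 0) := by omega
  have h2 : (2*n+1) / 2 = n := by omega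
  simp [h1, h2]

lemma rs0 : rs 0 = 1 := by rw [rs]

lemma rs1 : rs 1 = 1 := by rw [show rs 1 = rs 0 from by simpa using rs_odd 0, rs0]

lemma A1 : A 1 = 1 := by simp [A, rs0]

lemma A2 : A 2 = 0 := by
  have := Finset.sum_range_succ (fun i => (-1:ℤ)^i * rs i) 1
  simp only [A]
  rw [this]
  simp [rs0, rs1, A] at *

lemma A_succ (n : ℕ) : A (n+1) = A n + (-1)^n * rs n :=
  Finset.sum_range_succ _ _

lemma t_eq (n : ℕ) : t n = A (n+1) := rfl

lemma A_four (M : ℕ) : A (4*M) = 2 * A M := by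
  induction M with
  | zero => simp [A]
  | succ m ih =>
    have h : 4*(m+1) = (4*m+3)+1 := by omega
    rw [h, A_succ, show 4*m+3 = (4*m+2)+1 from rfl, A_succ,
        show 4*m+2 = (4*m+1)+1 from rfl, A_succ,
        show 4*m+1 = (4*m)+1 from rfl, A_succ, ih, A_succ]
    have e0 : rs (4*m) = rs m := by
      rw [show 4*m = 2*(2*m) from by ring, rs_even, rs_even]
    have e1 : rs (4*m+1) = rs m := by
      rw [show 4*m+1 = 2*(2*m)+1 from by ring, rs_odd, rs_even, pow_mul]
      norm_num
    have e2 : rs (4*m+2) = (-1)^m * rs m := by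
      rw [show 4*m+2 = 2*(2*m+1) from by ring, rs_even, rs_odd]
    have e3 : rs (4*m+3) = -((-1)^m * rs m) := by
      rw [show 4*m+3 = 2*(2*m+1)+1 from by ring, rs_odd, rs_odd,
          pow_add, pow_mul]
      ring_nf
    rw [e0, e1, e2, e3]
    have p : ∀ j : ℕ, ((-1:ℤ))^(4*m+j) = (-1)^j := by
      intro j; rw [pow_add, pow_mul]; norm_num
    rw [show (4*m : ℕ) = 4*m+0 from rfl, p 0]
    rw [show (4*m+0+1 : ℕ) = 4*m+1 from rfl, p 1]
    rw [show (4*m+1+1 : ℕ) = 4*m+2 from rfl, p 2]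
    rw [show (4*m+2+1 : ℕ) = 4*m+3 from rfl, p 3]
    ring

lemma rs_pow (k : ℕ) : rs (2^k) = 1 := by
  induction k with
  | zero => norm_num [rs]
  | succ m ih => rw [pow_succ, mul_comm, rs_even, ih]

lemma A_even_pow (k : ℕ) : 1 ≤ k → A (2^(2*k)) = 2^k := by
  induction k with
  | zero => omega
  | succ m ih =>
    intro _
    have h : 2^(2*(m+1)) = 4 * 2^(2*m) := by ring
    rw [h, A_four]
    cases m with
    | zero => norm_num [A1]
    | succ l => rw [ih (by omega)]; ring

lemma A_odd_pow (k : ℕ) : A (2^(2*k+1)) = 0 := by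
  induction k with
  | zero => simpa using A2
  | succ m ih =>
    have h : 2^(2*(m+1)+1) = 4 * 2^(2*m+1) := by ring
    rw [h, A_four, ih, mul_zero]

theorem stmt15 : (∀ k : ℕ, 1 ≤ k → t (2^(2*k)) = 2^k + 1) ∧
    (∀ k : ℕ, t (2^(2*k+1)) = 1) ∧
    (∀ k : ℕ, t (2^(2*k) - 1) = 2^k) ∧
    (∀ k : ℕ, t (2^(2*k+1) - 1) = 0) := by
  have hsub : ∀ m : ℕ, t (2^m - 1) = A (2^m) := by
    intro m
    rw [t_eq]
    congr 1
    have : 1 ≤ 2^m := Nat.one_le_two_pow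
    omega
  have neg_pow : ∀ m : ℕ, 1 ≤ m → ((-1:ℤ))^(2^m) = 1 := by
    intro m hm
    have : Even (2^m) := by
      exact (Nat.even_pow).mpr ⟨even_two, by omega⟩
    exact this.neg_one_pow
  refine ⟨?_, ?_, ?_, ?_⟩
  · intro k hk
    rw [t_eq, A_succ, A_even_pow k hk, neg_pow _ (by omega), rs_pow]
    ring
  · intro k
    rw [t_eq, A_succ, A_odd_pow, neg_pow _ (by omega), rs_pow]
    ring
  · intro k
    rw [hsub]
    cases k with
    | zero => simpa using A1
    | succ l => exact A_even_pow _ (by omega)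
  · intro k
    rw [hsub, A_odd_pow]
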